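/- arXiv:1006.4685 — 2 statements merged into one kernel-verified Lean document; each statement's English description precedes it below -/
import Mathlib

section
/- Let 1 ≤ p < ∞ and ω ∈ A_p(φ). Then there is a constant C > 0 such that for every cube Q ⊂ ℝⁿ and every locally integrable f, (1/(φ(|Q|)|Q|)) ∫_Q |f(y)| dy ≤ C ((1/ω(5Q)) ∫_Q |f(y)|^p ω(y) dy)^{1/p}. In particular, for every measurable set E ⊂ Q, |E|/(φ(|Q|)|Q|) ≤ C (ω(E)/ω(5Q))^{1/p}. -/
open MeasureTheory Real Filter
open scoped ENNReal NNReal BigOperators FourierTransform RealInnerProductSpace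

noncomputable section

/-- Euclidean space `ℝⁿ`. -/
abbrev En (n : ℕ) : Type := EuclideanSpace ℝ (Fin n)

namespace Paper

variable {n : ℕ}

/-- The (closed) cube centered at `c` with sidelength `r`, sides parallel to the axes. -/
def cube (c : En n) (r : ℝ) : Set (En n) := {x | ∀ i, |x i - c i| ≤ r / 2}

/-- Lebesgue measure of a cube, as a real number. -/
def cubeVol (c : En n) (r : ℝ) : ℝ := (volume (cube c r)).toReal

/-- `φ(t) = (1+t)^{α₀}`. -/
def phi (α₀ t : ℝ) : ℝ := (1 + t) ^ α₀

/-- A weight: a positive, locally integrable function. -/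
def IsWeight (w : En n → ℝ) : Prop := (∀ x, 0 < w x) ∧ LocallyIntegrable w volume

/-- The measure `ω(E) = ∫_E ω dx`. -/
def wMeas (w : En n → ℝ) : Measure (En n) :=
  volume.withDensity (fun x => ENNReal.ofReal (w x))

/-- The maximal operator `M_{φ,η}` applied to an `ℝ≥0∞`-valued function:
`sup_{Q ∋ x} (1/(φ(|Q|)^η |Q|)) ∫_Q g`. -/
def MphiG (α₀ η : ℝ) (g : En n → ℝ≥0∞) (x : En n) : ℝ≥0∞ :=
  ⨆ (c : En n) (r : ℝ) (_ : 0 < r) (_ : x ∈ cube c r),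
    (∫⁻ y in cube c r, g y) /
      (ENNReal.ofReal ((phi α₀ (cubeVol c r)) ^ η) * volume (cube c r))

/-- `M_{φ,η} f(x) = sup_{Q ∋ x} (1/(φ(|Q|)^η |Q|)) ∫_Q |f|` for real-valued `f`. -/
def MphiEta (α₀ η : ℝ) (f : En n → ℝ) : En n → ℝ≥0∞ :=
  MphiG α₀ η (fun y => ENNReal.ofReal |f y|)

/-- `M_{φ,η} f` for complex-valued `f`. -/
def MphiEtaC (α₀ η : ℝ) (f : En n → ℂ) : En n → ℝ≥0∞ :=
  MphiG α₀ η (fun y => ENNReal.ofReal ‖f y‖)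

/-- `ω ∈ A₁(φ)`: `M_φ ω ≤ C ω` a.e. -/
def MemA1Phi (α₀ : ℝ) (w : En n → ℝ) : Prop :=
  ∃ C > 0, ∀ᵐ x ∂(volume : Measure (En n)),
    MphiEta α₀ 1 w x ≤ ENNReal.ofReal (C * w x)

/-- `ω ∈ A_p(φ)` for `1 < p`: the Muckenhoupt-type condition
`(1/(φ(|Q|)|Q|) ∫_Q ω) (1/(φ(|Q|)|Q|) ∫_Q ω^{-1/(p-1)})^{p-1} ≤ C` for all cubes `Q`. -/
def MemApPhiGT (α₀ p : ℝ) (w : En n → ℝ) : Prop :=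
  ∃ C > 0, ∀ (c : En n) (r : ℝ), 0 < r →
    ((∫⁻ y in cube c r, ENNReal.ofReal (w y)) /
        (ENNReal.ofReal (phi α₀ (cubeVol c r)) * volume (cube c r))) *
      ((∫⁻ y in cube c r, ENNReal.ofReal (w y ^ (-(1 / (p - 1))))) /
        (ENNReal.ofReal (phi α₀ (cubeVol c r)) * volume (cube c r))) ^ (p - 1) ≤
      ENNReal.ofReal C

/-- `ω ∈ A_p(φ)` for `1 ≤ p`. -/
def MemApPhi (α₀ p : ℝ) (w : En n → ℝ) : Prop :=
  if p = 1 then MemA1Phi α₀ w else MemApPhiGT α₀ p w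

/-- `A_∞(φ) = ⋃_{p ≥ 1} A_p(φ)`. -/
def MemAInfPhi (α₀ : ℝ) (w : En n → ℝ) : Prop := ∃ p, 1 ≤ p ∧ MemApPhi α₀ p w

/-- `(∫ g^p dω)^{1/p}` for an `ℝ≥0∞`-valued `g`. -/
def wLpNormG (p : ℝ) (w : En n → ℝ) (g : En n → ℝ≥0∞) : ℝ≥0∞ :=
  (∫⁻ x, (g x) ^ p ∂(wMeas w)) ^ (1 / p)

/-- The weighted norm `‖f‖_{L^p(ω)} = (∫ |f|^p ω dx)^{1/p}` for complex-valued `f`. -/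
def wLpNormC (p : ℝ) (w : En n → ℝ) (f : En n → ℂ) : ℝ≥0∞ :=
  wLpNormG p w (fun x => ENNReal.ofReal ‖f x‖)

/-- The pseudo-differential operator with symbol `σ`:
`Tf(x) = ∫ σ(x,ξ) e^{2πi x·ξ} 𝓕f(ξ) dξ`. -/
def pdo (σ : En n → En n → ℂ) (f : En n → ℂ) (x : En n) : ℂ :=
  ∫ ξ : En n, σ x ξ *
    Complex.exp (2 * (Real.pi : ℂ) * Complex.I * ((inner ℝ x ξ : ℝ) : ℂ)) * (𝓕 f) ξ

/-- The list of coordinate directions associated with a multi-index `α`,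
with `i` repeated `α i` times. -/
def mIdxDirs (α : Fin n → ℕ) : List (En n) :=
  ((List.finRange n).map fun i => List.replicate (α i) (EuclideanSpace.single i (1 : ℝ))).flatten

/-- Iterated directional derivative along a list of directions. -/
def dirDeriv (L : List (En n)) (f : En n → ℂ) : En n → ℂ :=
  L.foldr (fun v g => fun x => fderiv ℝ g x v) f

/-- `D_x^α D_ξ^β σ (x, ξ)`. -/
def symbolDeriv (σ : En n → En n → ℂ) (α β : Fin n → ℕ) (x ξ : En n) : ℂ :=
  dirDeriv (mIdxDirs β) (fun ξ' => dirDeriv (mIdxDirs α) (fun x' => σ x' ξ') x) ξ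

/-- `σ ∈ S^m_{1,0}`: smooth with `|D_x^α D_ξ^β σ(x,ξ)| ≤ C_{α,β} (1+|ξ|)^{m-|β|}`. -/
def IsSymbol (m : ℝ) (σ : En n → En n → ℂ) : Prop :=
  ContDiff ℝ (⊤ : ℕ∞) (fun q : En n × En n => σ q.1 q.2) ∧
  ∀ α β : Fin n → ℕ, ∃ C > 0, ∀ x ξ : En n,
    ‖symbolDeriv σ α β x ξ‖ ≤ C * (1 + ‖ξ‖) ^ (m - (∑ i, (β i : ℝ)))

/-- `σ ∈ S^{-∞}_{1,0}`: the symbol estimates hold for every order `m`. -/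
def IsSymbolSmoothing (σ : En n → En n → ℂ) : Prop :=
  ContDiff ℝ (⊤ : ℕ∞) (fun q : En n × En n => σ q.1 q.2) ∧
  ∀ (m : ℝ) (α β : Fin n → ℕ), ∃ C > 0, ∀ x ξ : En n,
    ‖symbolDeriv σ α β x ξ‖ ≤ C * (1 + ‖ξ‖) ^ (m - (∑ i, (β i : ℝ)))

/-- Average of a real function over a set. -/
def setAvg (S : Set (En n)) (f : En n → ℝ) : ℝ := (volume S).toReal⁻¹ * ∫ y in S, f y

/-- Average of a complex function over a set. -/
def setAvgC (S : Set (En n)) (f : En n → ℂ) : ℂ := ((volume S).toReal⁻¹ : ℝ) • ∫ y in S, f y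

/-- Average `b_Q` of `b` over the cube `Q(c,r)`. -/
def cubeAvg (c : En n) (r : ℝ) (b : En n → ℝ) : ℝ := setAvg (cube c r) b

/-- The set of mean oscillations `(1/|Q|)∫_Q |b - b_Q|` over all cubes. -/
def bmoSet (b : En n → ℝ) : Set ℝ :=
  {v | ∃ (c : En n) (r : ℝ), 0 < r ∧
    v = (cubeVol c r)⁻¹ * ∫ y in cube c r, |b y - cubeAvg c r b|}

/-- `‖b‖_{BMO}`. -/
def bmoNorm (b : En n → ℝ) : ℝ := sSup (bmoSet b)

/-- `b ∈ BMO(ℝⁿ)`. -/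
def MemBMO (b : En n → ℝ) : Prop :=
  LocallyIntegrable b volume ∧ BddAbove (bmoSet b)

/-- The commutator `[b,T]f = b · Tf − T(bf)`. -/
def commutator (b : En n → ℝ) (σ : En n → En n → ℂ) (f : En n → ℂ) (x : En n) : ℂ :=
  (b x : ℂ) * pdo σ f x - pdo σ (fun y => (b y : ℂ) * f y) x

/-- The sharp maximal operator `M^♯_{φ,η}` for real-valued `f`. -/
def MsharpEta (α₀ η : ℝ) (f : En n → ℝ) (x : En n) : ℝ≥0∞ :=
  (⨆ (c : En n) (r : ℝ) (_ : 0 < r) (_ : r < 1) (_ : x ∈ cube c r),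
      (∫⁻ y in cube c r, ENNReal.ofReal |f y - setAvg (cube c r) f|) / volume (cube c r)) +
  (⨆ (c : En n) (r : ℝ) (_ : 1 ≤ r) (_ : x ∈ cube c r),
      (∫⁻ y in cube c r, ENNReal.ofReal |f y|) /
        (ENNReal.ofReal ((phi α₀ (cubeVol c r)) ^ η) * volume (cube c r)))

/-- The sharp maximal operator `M^♯_{φ,η}` for complex-valued `f`. -/
def MsharpEtaC (α₀ η : ℝ) (f : En n → ℂ) (x : En n) : ℝ≥0∞ :=
  (⨆ (c : En n) (r : ℝ) (_ : 0 < r) (_ : r < 1) (_ : x ∈ cube c r),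
      (∫⁻ y in cube c r, ENNReal.ofReal ‖f y - setAvgC (cube c r) f‖) / volume (cube c r)) +
  (⨆ (c : En n) (r : ℝ) (_ : 1 ≤ r) (_ : x ∈ cube c r),
      (∫⁻ y in cube c r, ENNReal.ofReal ‖f y‖) /
        (ENNReal.ofReal ((phi α₀ (cubeVol c r)) ^ η) * volume (cube c r)))

/-- `M^♯_{δ,φ,η} f = (M^♯_{φ,η}(|f|^δ))^{1/δ}` for complex-valued `f`. -/
def MsharpDeltaEta (α₀ δ η : ℝ) (f : En n → ℂ) (x : En n) : ℝ≥0∞ :=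
  (MsharpEta α₀ η (fun y => ‖f y‖ ^ δ) x) ^ (1 / δ)

/-- The dyadic cube `2^{-k}(m + [0,1)ⁿ)`. -/
def dyadicCube (k : ℤ) (m : Fin n → ℤ) : Set (En n) :=
  {x | ∀ i, (m i : ℝ) * (2 : ℝ) ^ (-k) ≤ x i ∧ x i < ((m i : ℝ) + 1) * (2 : ℝ) ^ (-k)}

/-- The dyadic maximal operator `M^△_{φ,η}`. -/
def MdyadicEta (α₀ η : ℝ) (f : En n → ℝ) (x : En n) : ℝ≥0∞ :=
  ⨆ (k : ℤ) (m : Fin n → ℤ) (_ : x ∈ dyadicCube k m),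
    (∫⁻ y in dyadicCube k m, ENNReal.ofReal |f y|) /
      (ENNReal.ofReal ((phi α₀ ((volume (dyadicCube k m)).toReal)) ^ η) *
        volume (dyadicCube k m))

/-- The dyadic sharp maximal operator `M^{♯,△}_{φ,η}`. -/
def MsharpDyadicEta (α₀ η : ℝ) (f : En n → ℝ) (x : En n) : ℝ≥0∞ :=
  (⨆ (k : ℤ) (m : Fin n → ℤ) (_ : x ∈ dyadicCube k m) (_ : (2 : ℝ) ^ (-k) < 1),
      (∫⁻ y in dyadicCube k m, ENNReal.ofReal |f y - setAvg (dyadicCube k m) f|) /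
        volume (dyadicCube k m)) +
  (⨆ (k : ℤ) (m : Fin n → ℤ) (_ : x ∈ dyadicCube k m) (_ : 1 ≤ (2 : ℝ) ^ (-k)),
      (∫⁻ y in dyadicCube k m, ENNReal.ofReal |f y|) /
        (ENNReal.ofReal ((phi α₀ ((volume (dyadicCube k m)).toReal)) ^ η) *
          volume (dyadicCube k m)))

/-- The weighted maximal operator `M_ω f(x) = sup_{Q ∋ x} (1/ω(5Q)) ∫_Q |f| ω`. -/
def Mw (w : En n → ℝ) (f : En n → ℝ) (x : En n) : ℝ≥0∞ :=
  ⨆ (c : En n) (r : ℝ) (_ : 0 < r) (_ : x ∈ cube c r),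
    (∫⁻ y in cube c r, ENNReal.ofReal |f y| * ENNReal.ofReal (w y)) /
      wMeas w (cube c (5 * r))

/-- The Young function `B(t) = Φ(t) = t(1 + log⁺ t)`. -/
def Bfun (t : ℝ) : ℝ := t * (1 + max (Real.log t) 0)

/-- The Luxemburg norm `‖f‖_{B,Q} = inf {λ > 0 : (1/|Q|)∫_Q B(|f|/λ) ≤ 1}` (real `f`). -/
def luxNorm (S : Set (En n)) (f : En n → ℝ) : ℝ≥0∞ :=
  sInf (ENNReal.ofReal '' {lam : ℝ | 0 < lam ∧
    (∫⁻ y in S, ENNReal.ofReal (Bfun (|f y| / lam))) / volume S ≤ 1})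

/-- The Luxemburg norm for complex `f`. -/
def luxNormC (S : Set (En n)) (f : En n → ℂ) : ℝ≥0∞ :=
  sInf (ENNReal.ofReal '' {lam : ℝ | 0 < lam ∧
    (∫⁻ y in S, ENNReal.ofReal (Bfun (‖f y‖ / lam))) / volume S ≤ 1})

/-- `M_{L log L, φ, η} f(x) = sup_{Q ∋ x} φ(|Q|)^{−η} ‖f‖_{L log L, Q}` (real `f`). -/
def MLlogL (α₀ η : ℝ) (f : En n → ℝ) (x : En n) : ℝ≥0∞ :=
  ⨆ (c : En n) (r : ℝ) (_ : 0 < r) (_ : x ∈ cube c r),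
    ENNReal.ofReal ((phi α₀ (cubeVol c r)) ^ (-η)) * luxNorm (cube c r) f

/-- `M_{L log L, φ, η} f` for complex `f`. -/
def MLlogLC (α₀ η : ℝ) (f : En n → ℂ) (x : En n) : ℝ≥0∞ :=
  ⨆ (c : En n) (r : ℝ) (_ : 0 < r) (_ : x ∈ cube c r),
    ENNReal.ofReal ((phi α₀ (cubeVol c r)) ^ (-η)) * luxNormC (cube c r) f

end Paper

open Paper MeasureTheory Real
open scoped ENNReal

namespace Stmt6Aux
open Paper
variable {n : ℕ}

lemma cube_eq (c : En n) (r : ℝ) :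
    cube c r = (MeasurableEquiv.toLp 2 (Fin n → ℝ)).symm ⁻¹'
      (Set.univ.pi fun i => Set.Icc (c i - r / 2) (c i + r / 2)) := by
  ext x
  simp only [cube, Set.mem_setOf_eq, Set.mem_preimage, Set.mem_pi, Set.mem_univ, true_implies,
    Set.mem_Icc]
  refine forall_congr' fun i => ?_
  rw [abs_sub_le_iff]
  show _ ↔ c i - r / 2 ≤ x i ∧ x i ≤ c i + r / 2
  constructor <;> rintro ⟨h1, h2⟩ <;> constructor <;> linarith

lemma measurableSet_cube (c : En n) (r : ℝ) : MeasurableSet (cube c r) := by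
  rw [cube_eq]
  exact (MeasurableEquiv.toLp 2 (Fin n → ℝ)).symm.measurable
    (MeasurableSet.univ_pi fun i => measurableSet_Icc)

lemma volume_cube (c : En n) {r : ℝ} (hr : 0 ≤ r) :
    volume (cube c r) = ENNReal.ofReal r ^ n := by
  rw [cube_eq, (EuclideanSpace.volume_preserving_symm_measurableEquiv_toLp (Fin n)).measure_preimage
    (MeasurableSet.univ_pi fun i => measurableSet_Icc).nullMeasurableSet, volume_pi_pi]
  have h : ∀ i : Fin n, (c i + r / 2) - (c i - r / 2) = r := fun i => by ring
  simp [Real.volume_Icc, h, Finset.prod_const]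

lemma cubeVol_eq (c : En n) {r : ℝ} (hr : 0 ≤ r) : cubeVol c r = r ^ n := by
  rw [cubeVol, volume_cube c hr, ENNReal.toReal_pow, ENNReal.toReal_ofReal hr]

lemma cube_subset (c : En n) {r : ℝ} (hr : 0 ≤ r) : cube c r ⊆ cube c (5 * r) := by
  intro x hx i
  have := hx i
  have : |x i - c i| ≤ r / 2 := this
  nlinarith [abs_nonneg (x i - c i)]

lemma isCompact_cube (c : En n) (r : ℝ) : IsCompact (cube c r) := by
  have hsub : cube c r ⊆ Metric.closedBall c (Real.sqrt n * (|r| / 2)) := by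
    intro x hx
    rw [Metric.mem_closedBall, EuclideanSpace.dist_eq]
    have hsum : ∑ i, dist (x i) (c i) ^ 2 ≤ (n : ℝ) * (|r| / 2) ^ 2 := by
      calc ∑ i, dist (x i) (c i) ^ 2 ≤ ∑ _i : Fin n, (|r| / 2) ^ 2 := by
            refine Finset.sum_le_sum fun i _ => ?_
            have h1 : dist (x i) (c i) ≤ r / 2 := by rw [Real.dist_eq]; exact hx i
            have h2 : (0 : ℝ) ≤ dist (x i) (c i) := dist_nonneg
            have h3 : r / 2 ≤ |r| / 2 := by
              have := le_abs_self r; linarith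
            nlinarith
        _ = (n : ℝ) * (|r| / 2) ^ 2 := by simp [Finset.sum_const, Finset.card_univ]
    calc Real.sqrt (∑ i, dist (x i) (c i) ^ 2) ≤ Real.sqrt ((n : ℝ) * (|r| / 2) ^ 2) :=
          Real.sqrt_le_sqrt hsum
      _ = Real.sqrt n * (|r| / 2) := by
          rw [Real.sqrt_mul (by positivity), Real.sqrt_sq (by positivity)]
  have hclosed : IsClosed (cube c r) := by
    have : cube c r = ⋂ i, (fun x : En n => |(EuclideanSpace.proj (𝕜 := ℝ) i) x - c i|) ⁻¹' Set.Iic (r / 2) := by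
      ext x; simp [cube, Set.mem_iInter]
    rw [this]
    exact isClosed_iInter fun i => IsClosed.preimage (by fun_prop) isClosed_Iic
  exact Metric.isCompact_of_isClosed_isBounded hclosed (Metric.isBounded_closedBall.subset hsub)
lemma phi_pos {α₀ t : ℝ} (ht : 0 ≤ t) : 0 < phi α₀ t :=
  Real.rpow_pos_of_pos (by linarith) _

lemma cubeVol_nonneg (c : En n) (r : ℝ) : 0 ≤ cubeVol c r := ENNReal.toReal_nonneg

/-- Comparison of `φ(|5Q|)|5Q|` with `φ(|Q|)|Q|`. -/
lemma D5_le {α₀ : ℝ} (hα₀ : 0 < α₀) (c : En n) {r : ℝ} (hr : 0 < r) :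
    ENNReal.ofReal (phi α₀ (cubeVol c (5 * r))) * volume (cube c (5 * r)) ≤
      ENNReal.ofReal (((5 : ℝ) ^ n) ^ α₀ * 5 ^ n) *
        (ENNReal.ofReal (phi α₀ (cubeVol c r)) * volume (cube c r)) := by
  have hr' : (0 : ℝ) ≤ r := hr.le
  have h5r : (0 : ℝ) ≤ 5 * r := by linarith
  have hrn : (0 : ℝ) ≤ r ^ n := by positivity
  have hphi : phi α₀ (cubeVol c (5 * r)) ≤ ((5 : ℝ) ^ n) ^ α₀ * phi α₀ (cubeVol c r) := by
    rw [cubeVol_eq c hr', cubeVol_eq c h5r, phi, phi, mul_pow]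
    have h1 : (1 : ℝ) + 5 ^ n * r ^ n ≤ 5 ^ n * (1 + r ^ n) := by
      have h5 : (1 : ℝ) ≤ 5 ^ n := one_le_pow₀ (by norm_num)
      nlinarith
    calc (1 + 5 ^ n * r ^ n) ^ α₀ ≤ ((5 : ℝ) ^ n * (1 + r ^ n)) ^ α₀ :=
          Real.rpow_le_rpow (by positivity) h1 hα₀.le
      _ = ((5 : ℝ) ^ n) ^ α₀ * (1 + r ^ n) ^ α₀ := Real.mul_rpow (by positivity) (by positivity)
  have hvol : volume (cube c (5 * r)) = ENNReal.ofReal ((5 : ℝ) ^ n) * volume (cube c r) := by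
    rw [volume_cube c hr', volume_cube c h5r, ENNReal.ofReal_mul (by norm_num), mul_pow,
      ← ENNReal.ofReal_pow (by norm_num)]
  calc ENNReal.ofReal (phi α₀ (cubeVol c (5 * r))) * volume (cube c (5 * r))
      ≤ ENNReal.ofReal (((5 : ℝ) ^ n) ^ α₀ * phi α₀ (cubeVol c r)) *
          (ENNReal.ofReal ((5 : ℝ) ^ n) * volume (cube c r)) := by
        rw [hvol]; exact mul_le_mul' (ENNReal.ofReal_le_ofReal hphi) le_rfl
    _ = ENNReal.ofReal (((5 : ℝ) ^ n) ^ α₀ * 5 ^ n) *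
          (ENNReal.ofReal (phi α₀ (cubeVol c r)) * volume (cube c r)) := by
        rw [ENNReal.ofReal_mul (by positivity), ENNReal.ofReal_mul (by positivity)]
        ring

lemma lint_wMeas (w : En n → ℝ) (hw : IsWeight w) {S : Set (En n)} (hS : MeasurableSet S)
    (g : En n → ℝ≥0∞) :
    ∫⁻ y in S, g y ∂(wMeas w) = ∫⁻ y in S, ENNReal.ofReal (w y) * g y := by
  rw [wMeas]
  exact setLIntegral_withDensity_eq_setLIntegral_mul_non_measurable₀ _
    (hw.2.aestronglyMeasurable.aemeasurable.ennreal_ofReal.restrict) g hS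
    (Filter.Eventually.of_forall fun x => ENNReal.ofReal_lt_top)

lemma wMeas_cube (w : En n → ℝ) (c : En n) (r : ℝ) :
    wMeas w (cube c r) = ∫⁻ y in cube c r, ENNReal.ofReal (w y) := by
  rw [wMeas, withDensity_apply _ (measurableSet_cube c r)]

lemma wMeas_cube_lt_top (w : En n → ℝ) (hw : IsWeight w) (c : En n) (r : ℝ) :
    wMeas w (cube c r) < ∞ := by
  rw [wMeas_cube]
  exact (hw.2.integrableOn_isCompact (isCompact_cube c r)).lintegral_lt_top

lemma wMeas_cube_pos (w : En n → ℝ) (hw : IsWeight w) (c : En n) {r : ℝ} (hr : 0 < r) :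
    0 < wMeas w (cube c r) := by
  rw [wMeas_cube, pos_iff_ne_zero]
  intro h0
  rw [lintegral_eq_zero_iff' (hw.2.aestronglyMeasurable.aemeasurable.ennreal_ofReal.restrict)]
    at h0
  have huniv : {x : En n | ¬ (fun y => ENNReal.ofReal (w y)) x = (0 : En n → ℝ≥0∞) x} =
      Set.univ := by
    ext x
    simp only [Set.mem_setOf_eq, Set.mem_univ, iff_true, Pi.zero_apply]
    simp [ENNReal.ofReal_eq_zero, not_le, hw.1 x]
  have h1 : volume.restrict (cube c r) Set.univ = 0 := by
    have := h0
    rw [Filter.EventuallyEq, ae_iff] at this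
    rw [← huniv]; exact this
  rw [Measure.restrict_apply_univ] at h1
  rw [volume_cube c hr.le] at h1
  exact (pow_ne_zero n (by simp [hr]) h1).elim

lemma vol_cube_pos (c : En n) {r : ℝ} (hr : 0 < r) : volume (cube c r) ≠ 0 := by
  rw [volume_cube c hr.le]
  exact pow_ne_zero n (by simp [hr])

lemma vol_cube_lt_top (c : En n) {r : ℝ} (hr : 0 ≤ r) : volume (cube c r) ≠ ∞ := by
  rw [volume_cube c hr]
  exact ENNReal.pow_ne_top ENNReal.ofReal_ne_top

/-- Core estimate: `(∫_Q |f|) ω(5Q)^{1/p} ≤ C (∫_Q |f|^p ω)^{1/p} φ(|Q|)|Q|`. -/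
lemma core {α₀ : ℝ} (hα₀ : 0 < α₀) {p : ℝ} (hp : 1 ≤ p)
    (w : En n → ℝ) (hw : IsWeight w) (hAp : MemApPhi α₀ p w) :
    ∃ C : ℝ, 0 < C ∧ ∀ (c : En n) (r : ℝ), 0 < r → ∀ f : En n → ℝ,
      AEStronglyMeasurable f volume →
      (∫⁻ y in cube c r, ENNReal.ofReal |f y|) * (wMeas w (cube c (5 * r))) ^ (1 / p) ≤
        ENNReal.ofReal C *
          (∫⁻ y in cube c r, ENNReal.ofReal (w y) * ENNReal.ofReal |f y| ^ p) ^ (1 / p) *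
          (ENNReal.ofReal (phi α₀ (cubeVol c r)) * volume (cube c r)) := by
  set K : ℝ := ((5 : ℝ) ^ n) ^ α₀ * 5 ^ n with hK
  have hKpos : 0 < K := by positivity
  by_cases hp1 : p = 1
  · -- case p = 1
    subst hp1
    rw [MemApPhi, if_pos rfl] at hAp
    obtain ⟨C, hC, ha⟩ := hAp
    refine ⟨C * K, by positivity, fun c r hr f hf => ?_⟩
    have h5r : 0 < 5 * r := by linarith
    have hD5_0 : (ENNReal.ofReal (phi α₀ (cubeVol c (5 * r))) * volume (cube c (5 * r))) ≠ 0 :=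
      mul_ne_zero (ENNReal.ofReal_pos.mpr (phi_pos (cubeVol_nonneg _ _))).ne'
        (vol_cube_pos c h5r)
    have hD5_t : (ENNReal.ofReal (phi α₀ (cubeVol c (5 * r))) * volume (cube c (5 * r))) ≠ ∞ :=
      ENNReal.mul_ne_top ENNReal.ofReal_ne_top (vol_cube_lt_top c h5r.le)
    set D5 : ℝ≥0∞ := ENNReal.ofReal (phi α₀ (cubeVol c (5 * r))) * volume (cube c (5 * r))
      with hD5def
    set W : ℝ≥0∞ := wMeas w (cube c (5 * r)) with hWdef
    have hWt : W ≠ ∞ := (wMeas_cube_lt_top w hw c _).ne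
    -- pointwise a.e. bound on W
    have hkey : ∀ᵐ x ∂(volume : Measure (En n)), x ∈ cube c (5 * r) →
        W ≤ ENNReal.ofReal (C * w x) * D5 := by
      filter_upwards [ha] with x hx hxQ5
      have hle : (∫⁻ y in cube c (5 * r), ENNReal.ofReal |w y|) /
          (ENNReal.ofReal ((phi α₀ (cubeVol c (5 * r))) ^ (1 : ℝ)) *
            volume (cube c (5 * r))) ≤ MphiEta α₀ 1 w x := by
        refine le_iSup_of_le c (le_iSup_of_le (5 * r) (le_iSup_of_le h5r
          (le_iSup_of_le hxQ5 le_rfl)))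
      rw [Real.rpow_one] at hle
      have habs : (∫⁻ y in cube c (5 * r), ENNReal.ofReal |w y|) = W := by
        rw [hWdef, wMeas_cube]
        exact lintegral_congr fun y => by rw [abs_of_pos (hw.1 y)]
      rw [habs] at hle
      exact (ENNReal.div_le_iff hD5_0 hD5_t).mp (hle.trans hx)
    have hmain : (∫⁻ y in cube c r, ENNReal.ofReal |f y|) * W ≤
        (ENNReal.ofReal C * D5) *
          ∫⁻ y in cube c r, ENNReal.ofReal (w y) * ENNReal.ofReal |f y| := by
      rw [← lintegral_mul_const' W _ hWt]
      rw [← lintegral_const_mul' _ _ (ENNReal.mul_ne_top ENNReal.ofReal_ne_top hD5_t)]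
      refine lintegral_mono_ae ?_
      filter_upwards [ae_restrict_of_ae hkey, ae_restrict_mem (measurableSet_cube c r)]
        with y hy hyQ
      have h1 : W ≤ ENNReal.ofReal (C * w y) * D5 := hy (cube_subset c hr.le hyQ)
      calc ENNReal.ofReal |f y| * W ≤
            ENNReal.ofReal |f y| * (ENNReal.ofReal (C * w y) * D5) := mul_le_mul' le_rfl h1
        _ = ENNReal.ofReal C * D5 * (ENNReal.ofReal (w y) * ENNReal.ofReal |f y|) := by
            rw [ENNReal.ofReal_mul hC.le]; ring
    have hD5le : D5 ≤ ENNReal.ofReal K *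
        (ENNReal.ofReal (phi α₀ (cubeVol c r)) * volume (cube c r)) := D5_le hα₀ c hr
    have : (∫⁻ y in cube c r, ENNReal.ofReal |f y|) * W ≤
        ENNReal.ofReal (C * K) *
          (∫⁻ y in cube c r, ENNReal.ofReal (w y) * ENNReal.ofReal |f y|) *
          (ENNReal.ofReal (phi α₀ (cubeVol c r)) * volume (cube c r)) := by
      refine hmain.trans ?_
      calc ENNReal.ofReal C * D5 *
            ∫⁻ y in cube c r, ENNReal.ofReal (w y) * ENNReal.ofReal |f y| ≤
          ENNReal.ofReal C * (ENNReal.ofReal K *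
              (ENNReal.ofReal (phi α₀ (cubeVol c r)) * volume (cube c r))) *
            ∫⁻ y in cube c r, ENNReal.ofReal (w y) * ENNReal.ofReal |f y| := by
            exact mul_le_mul' (mul_le_mul' le_rfl hD5le) le_rfl
        _ = ENNReal.ofReal (C * K) *
              (∫⁻ y in cube c r, ENNReal.ofReal (w y) * ENNReal.ofReal |f y|) *
              (ENNReal.ofReal (phi α₀ (cubeVol c r)) * volume (cube c r)) := by
            rw [ENNReal.ofReal_mul hC.le]; ring
    simpa [ENNReal.rpow_one] using this
  · -- case 1 < p
    have hp1' : 1 < p := lt_of_le_of_ne hp (Ne.symm hp1)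
    have hp0 : p ≠ 0 := by linarith
    have hpm1 : (0 : ℝ) < p - 1 := by linarith
    rw [MemApPhi, if_neg hp1] at hAp
    obtain ⟨C, hC, hap⟩ := hAp
    have hpq : p.HolderConjugate (p / (p - 1)) := Real.HolderConjugate.conjExponent hp1'
    set q : ℝ := p / (p - 1) with hq
    refine ⟨C ^ (1 / p) * K, by positivity, fun c r hr f hf => ?_⟩
    have h5r : 0 < 5 * r := by linarith
    set Q : Set (En n) := cube c r with hQdef
    set Q5 : Set (En n) := cube c (5 * r) with hQ5def
    set D5 : ℝ≥0∞ := ENNReal.ofReal (phi α₀ (cubeVol c (5 * r))) * volume (cube c (5 * r))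
      with hD5def
    have hD5_0 : D5 ≠ 0 :=
      mul_ne_zero (ENNReal.ofReal_pos.mpr (phi_pos (cubeVol_nonneg _ _))).ne'
        (vol_cube_pos c h5r)
    have hD5_t : D5 ≠ ∞ :=
      ENNReal.mul_ne_top ENNReal.ofReal_ne_top (vol_cube_lt_top c h5r.le)
    set W : ℝ≥0∞ := wMeas w (cube c (5 * r)) with hWdef
    set N5 : ℝ≥0∞ := ∫⁻ y in Q5, ENNReal.ofReal (w y ^ (-(1 / (p - 1)))) with hN5def
    set N : ℝ≥0∞ := ∫⁻ y in Q, ENNReal.ofReal (w y ^ (-(1 / (p - 1)))) with hNdef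
    set A : ℝ≥0∞ := ∫⁻ y in Q, ENNReal.ofReal |f y| with hAdef
    set B : ℝ≥0∞ := ∫⁻ y in Q, ENNReal.ofReal (w y) * ENNReal.ofReal |f y| ^ p with hBdef
    -- Step 1: Hölder
    have haf : AEMeasurable (fun y => ENNReal.ofReal |f y|) (volume.restrict Q) := by
      simpa [Real.norm_eq_abs] using hf.norm.aemeasurable.ennreal_ofReal.restrict
    have haw : AEMeasurable (fun y => ENNReal.ofReal (w y)) (volume.restrict Q) :=
      hw.2.aestronglyMeasurable.aemeasurable.ennreal_ofReal.restrict
    have holder : A ≤ B ^ (1 / p) * N ^ (1 / q) := by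
      have hF : AEMeasurable
          (fun y => ENNReal.ofReal |f y| * ENNReal.ofReal (w y) ^ (1 / p))
          (volume.restrict Q) := haf.mul (haw.pow aemeasurable_const)
      have hG : AEMeasurable (fun y => ENNReal.ofReal (w y) ^ (-(1 / p)))
          (volume.restrict Q) := haw.pow aemeasurable_const
      have h := ENNReal.lintegral_mul_le_Lp_mul_Lq (volume.restrict Q) hpq hF hG
      have hFG : ∀ y : En n,
          (fun y => ENNReal.ofReal |f y| * ENNReal.ofReal (w y) ^ (1 / p)) y *
            (fun y => ENNReal.ofReal (w y) ^ (-(1 / p))) y = ENNReal.ofReal |f y| := by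
        intro y
        have hw0 : ENNReal.ofReal (w y) ≠ 0 := (ENNReal.ofReal_pos.mpr (hw.1 y)).ne'
        have hwt : ENNReal.ofReal (w y) ^ ((1 : ℝ) / p) ≠ 0 :=
          (ENNReal.rpow_pos (ENNReal.ofReal_pos.mpr (hw.1 y)) ENNReal.ofReal_ne_top).ne'
        have hwt2 : ENNReal.ofReal (w y) ^ ((1 : ℝ) / p) ≠ ∞ :=
          ENNReal.rpow_ne_top_of_nonneg (by positivity) ENNReal.ofReal_ne_top
        simp only
        rw [ENNReal.rpow_neg, mul_assoc, ENNReal.mul_inv_cancel hwt hwt2, mul_one]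
      have hFp : ∀ y : En n,
          ((fun y => ENNReal.ofReal |f y| * ENNReal.ofReal (w y) ^ (1 / p)) y) ^ p =
            ENNReal.ofReal (w y) * ENNReal.ofReal |f y| ^ p := by
        intro y
        simp only
        rw [ENNReal.mul_rpow_of_nonneg _ _ (by positivity : (0:ℝ) ≤ p),
          ← ENNReal.rpow_mul, one_div_mul_cancel hp0, ENNReal.rpow_one, mul_comm]
      have hGq : ∀ y : En n,
          ((fun y => ENNReal.ofReal (w y) ^ (-(1 / p))) y) ^ q =
            ENNReal.ofReal (w y ^ (-(1 / (p - 1)))) := by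
        intro y
        simp only
        rw [← ENNReal.rpow_mul]
        have hexp : (-(1 / p)) * q = -(1 / (p - 1)) := by
          rw [hq]; field_simp
        rw [hexp, ENNReal.ofReal_rpow_of_pos (hw.1 y)]
      calc A = ∫⁻ y in Q,
            (fun y => ENNReal.ofReal |f y| * ENNReal.ofReal (w y) ^ (1 / p)) y *
              (fun y => ENNReal.ofReal (w y) ^ (-(1 / p))) y :=
            lintegral_congr fun y => (hFG y).symm
        _ ≤ _ := h
        _ = B ^ (1 / p) * N ^ (1 / q) := by
            rw [lintegral_congr hFp, lintegral_congr hGq]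
    -- Step 2: A_p condition on 5Q
    have hap5 := hap c (5 * r) h5r
    have hW5 : (∫⁻ y in cube c (5 * r), ENNReal.ofReal (w y)) = W := (wMeas_cube w c _).symm
    rw [hW5] at hap5
    have hD5p0 : D5 ^ (p - 1) ≠ 0 := (ENNReal.rpow_pos (pos_iff_ne_zero.mpr hD5_0) hD5_t).ne'
    have hD5pt : D5 ^ (p - 1) ≠ ∞ := ENNReal.rpow_ne_top_of_nonneg hpm1.le hD5_t
    have hc1 : D5⁻¹ * D5 = 1 := ENNReal.inv_mul_cancel hD5_0 hD5_t
    have hc2 : (D5 ^ (p - 1))⁻¹ * D5 ^ (p - 1) = 1 := ENNReal.inv_mul_cancel hD5p0 hD5pt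
    have keyeq : (W / D5 * (N5 / D5) ^ (p - 1)) * (D5 * D5 ^ (p - 1)) = W * N5 ^ (p - 1) := by
      rw [ENNReal.div_rpow_of_nonneg _ _ hpm1.le, div_eq_mul_inv, div_eq_mul_inv]
      have : W * D5⁻¹ * (N5 ^ (p - 1) * (D5 ^ (p - 1))⁻¹) * (D5 * D5 ^ (p - 1)) =
          W * N5 ^ (p - 1) * ((D5⁻¹ * D5) * ((D5 ^ (p - 1))⁻¹ * D5 ^ (p - 1))) := by ring
      rw [this, hc1, hc2, mul_one, mul_one]
    have hD5p : D5 * D5 ^ (p - 1) = D5 ^ p := by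
      nth_rewrite 1 [← ENNReal.rpow_one D5]
      rw [← ENNReal.rpow_add _ _ hD5_0 hD5_t]
      ring_nf
    have hap5' : W * N5 ^ (p - 1) ≤ ENNReal.ofReal C * D5 ^ p := by
      rw [← keyeq, hD5p]
      exact mul_le_mul' hap5 le_rfl
    -- Step 3: combine
    have hNle : N ≤ N5 := lintegral_mono_set (cube_subset c hr.le)
    have hWprod : N ^ (1 / q) * W ^ (1 / p) ≤ ENNReal.ofReal (C ^ (1 / p)) * D5 := by
      have h1q : 1 / q = (p - 1) * (1 / p) := by rw [hq]; field_simp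
      calc N ^ (1 / q) * W ^ (1 / p) ≤ N5 ^ (1 / q) * W ^ (1 / p) :=
            mul_le_mul' (ENNReal.rpow_le_rpow hNle (by positivity)) le_rfl
        _ = (N5 ^ (p - 1) * W) ^ (1 / p) := by
            rw [h1q, ENNReal.rpow_mul, ENNReal.mul_rpow_of_nonneg _ _ (by positivity : (0:ℝ) ≤ 1 / p)]
        _ ≤ (ENNReal.ofReal C * D5 ^ p) ^ (1 / p) := by
            refine ENNReal.rpow_le_rpow ?_ (by positivity)
            rw [mul_comm]; exact hap5'
        _ = ENNReal.ofReal (C ^ (1 / p)) * D5 := by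
            rw [ENNReal.mul_rpow_of_nonneg _ _ (by positivity : (0:ℝ) ≤ 1 / p),
              ← ENNReal.rpow_mul, mul_one_div_cancel hp0, ENNReal.rpow_one,
              ENNReal.ofReal_rpow_of_pos hC]
    calc A * W ^ (1 / p) ≤ (B ^ (1 / p) * N ^ (1 / q)) * W ^ (1 / p) :=
          mul_le_mul' holder le_rfl
      _ = B ^ (1 / p) * (N ^ (1 / q) * W ^ (1 / p)) := by ring
      _ ≤ B ^ (1 / p) * (ENNReal.ofReal (C ^ (1 / p)) * D5) := mul_le_mul' le_rfl hWprod
      _ ≤ B ^ (1 / p) * (ENNReal.ofReal (C ^ (1 / p)) * (ENNReal.ofReal K *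
            (ENNReal.ofReal (phi α₀ (cubeVol c r)) * volume (cube c r)))) :=
          mul_le_mul' le_rfl (mul_le_mul' le_rfl (D5_le hα₀ c hr))
      _ = ENNReal.ofReal (C ^ (1 / p) * K) * B ^ (1 / p) *
            (ENNReal.ofReal (phi α₀ (cubeVol c r)) * volume (cube c r)) := by
          rw [hK, ENNReal.ofReal_mul (by positivity), ENNReal.ofReal_mul (by positivity),
            ENNReal.ofReal_mul (by positivity)]
          ring

end Stmt6Aux
-- STATEMENT 6
theorem stmt6 {n : ℕ} (hn : 1 ≤ n) {α₀ : ℝ} (hα₀ : 0 < α₀)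
    {p : ℝ} (hp : 1 ≤ p) (w : En n → ℝ) (hw : IsWeight w) (hAp : MemApPhi α₀ p w) :
    ∃ C > 0, ∀ (c : En n) (r : ℝ), 0 < r →
      (∀ f : En n → ℝ, LocallyIntegrable f volume →
        (∫⁻ y in cube c r, ENNReal.ofReal |f y|) /
            (ENNReal.ofReal (phi α₀ (cubeVol c r)) * volume (cube c r)) ≤
          ENNReal.ofReal C *
            ((∫⁻ y in cube c r, ENNReal.ofReal |f y| ^ p ∂(wMeas w)) /
                wMeas w (cube c (5 * r))) ^ (1 / p)) ∧
      (∀ E : Set (En n), MeasurableSet E → E ⊆ cube c r →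
        volume E / (ENNReal.ofReal (phi α₀ (cubeVol c r)) * volume (cube c r)) ≤
          ENNReal.ofReal C * (wMeas w E / wMeas w (cube c (5 * r))) ^ (1 / p)) := by
  obtain ⟨C, hC, hcore⟩ := Stmt6Aux.core hα₀ hp w hw hAp
  have hp0 : (0 : ℝ) < p := by linarith
  refine ⟨C, hC, fun c r hr => ?_⟩
  have h5r : 0 < 5 * r := by linarith
  have hD0 : (ENNReal.ofReal (phi α₀ (cubeVol c r)) * volume (cube c r)) ≠ 0 :=
    mul_ne_zero (ENNReal.ofReal_pos.mpr
      (Stmt6Aux.phi_pos (Stmt6Aux.cubeVol_nonneg _ _))).ne' (Stmt6Aux.vol_cube_pos c hr)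
  have hDt : (ENNReal.ofReal (phi α₀ (cubeVol c r)) * volume (cube c r)) ≠ ∞ :=
    ENNReal.mul_ne_top ENNReal.ofReal_ne_top (Stmt6Aux.vol_cube_lt_top c hr.le)
  have hW0 : wMeas w (cube c (5 * r)) ≠ 0 := (Stmt6Aux.wMeas_cube_pos w hw c h5r).ne'
  have hWt : wMeas w (cube c (5 * r)) ≠ ∞ := (Stmt6Aux.wMeas_cube_lt_top w hw c _).ne
  have hs0 : wMeas w (cube c (5 * r)) ^ (1 / p) ≠ 0 :=
    (ENNReal.rpow_pos (pos_iff_ne_zero.mpr hW0) hWt).ne'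
  have hst : wMeas w (cube c (5 * r)) ^ (1 / p) ≠ ∞ :=
    ENNReal.rpow_ne_top_of_nonneg (by positivity) hWt
  have main : ∀ f : En n → ℝ, AEStronglyMeasurable f volume →
      (∫⁻ y in cube c r, ENNReal.ofReal |f y|) /
          (ENNReal.ofReal (phi α₀ (cubeVol c r)) * volume (cube c r)) ≤
        ENNReal.ofReal C *
          ((∫⁻ y in cube c r, ENNReal.ofReal |f y| ^ p ∂(wMeas w)) /
              wMeas w (cube c (5 * r))) ^ (1 / p) := by
    intro f hf
    have key := hcore c r hr f hf
    have hB : (∫⁻ y in cube c r, ENNReal.ofReal |f y| ^ p ∂(wMeas w)) =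
        ∫⁻ y in cube c r, ENNReal.ofReal (w y) * ENNReal.ofReal |f y| ^ p :=
      Stmt6Aux.lint_wMeas w hw (Stmt6Aux.measurableSet_cube c r) _
    rw [hB, ENNReal.div_le_iff hD0 hDt]
    have h1 : (∫⁻ y in cube c r, ENNReal.ofReal |f y|) ≤
        (ENNReal.ofReal C *
            (∫⁻ y in cube c r, ENNReal.ofReal (w y) * ENNReal.ofReal |f y| ^ p) ^ (1 / p) *
            (ENNReal.ofReal (phi α₀ (cubeVol c r)) * volume (cube c r))) /
          wMeas w (cube c (5 * r)) ^ (1 / p) :=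
      (ENNReal.le_div_iff_mul_le (Or.inl hs0) (Or.inl hst)).mpr key
    refine h1.trans (le_of_eq ?_)
    rw [ENNReal.div_rpow_of_nonneg _ _ (by positivity : (0 : ℝ) ≤ 1 / p),
]
    simp only [div_eq_mul_inv]
    ring
  refine ⟨fun f hf => main f hf.aestronglyMeasurable, fun E hE hEQ => ?_⟩
  have hf : AEStronglyMeasurable (E.indicator fun _ => (1 : ℝ)) volume :=
    (stronglyMeasurable_const.indicator hE).aestronglyMeasurable
  have h1 : (∫⁻ y in cube c r, ENNReal.ofReal |E.indicator (fun _ => (1 : ℝ)) y|) =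
      volume E := by
    have hpt : ∀ y, ENNReal.ofReal |E.indicator (fun _ => (1 : ℝ)) y| =
        E.indicator (fun _ => (1 : ℝ≥0∞)) y := by
      intro y; by_cases hy : y ∈ E <;> simp [hy]
    rw [lintegral_congr hpt, lintegral_indicator hE, setLIntegral_one,
      Measure.restrict_apply hE, Set.inter_eq_self_of_subset_left hEQ]
  have h2 : (∫⁻ y in cube c r, ENNReal.ofReal |E.indicator (fun _ => (1 : ℝ)) y| ^ p
      ∂(wMeas w)) = wMeas w E := by
    have hpt : ∀ y, ENNReal.ofReal |E.indicator (fun _ => (1 : ℝ)) y| ^ p =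
        E.indicator (fun _ => (1 : ℝ≥0∞)) y := by
      intro y; by_cases hy : y ∈ E <;>
        simp [hy, ENNReal.one_rpow, ENNReal.zero_rpow_of_pos hp0]
    rw [lintegral_congr hpt, lintegral_indicator hE, setLIntegral_one,
      Measure.restrict_apply hE, Set.inter_eq_self_of_subset_left hEQ]
  have := main _ hf
  rwa [h1, h2] at this
end
end

section
/- Let ω ∈ A_1(φ) and η ≥ 2. Then there exists a constant C > 0 such that for every function f and every λ > 0, ω({x ∈ ℝⁿ : M_{L log L, φ, η} f(x) > λ}) ≤ C ∫_{ℝⁿ} Φ(|f(y)|/λ) ω(y) dy, where Φ(t) = t(1+log⁺ t). -/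
open MeasureTheory Real Filter
open scoped ENNReal NNReal BigOperators FourierTransform RealInnerProductSpace

noncomputable section

namespace Paper
open Set
variable {n : ℕ}
lemma cube_eq_preimage (c : En n) (r : ℝ) :
    cube c r = ((MeasurableEquiv.toLp 2 (Fin n → ℝ)).symm) ⁻¹'
      (Set.univ.pi fun i => Icc (c i - r/2) (c i + r/2)) := by
  ext x
  simp only [cube, Set.mem_preimage, Set.mem_pi, Set.mem_univ, forall_true_left, Set.mem_setOf_eq,
    Set.mem_Icc, true_implies]
  refine forall_congr' fun i => ?_
  have hxi : (((MeasurableEquiv.toLp 2 (Fin n → ℝ)).symm) x) i = x i := rfl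
  rw [hxi, abs_sub_le_iff]
  constructor
  · rintro ⟨h1, h2⟩; exact ⟨by linarith, by linarith⟩
  · rintro ⟨h1, h2⟩; exact ⟨by linarith, by linarith⟩
lemma measurableSet_cube (c : En n) (r : ℝ) : MeasurableSet (cube c r) := by
  rw [cube_eq_preimage]
  exact ((MeasurableEquiv.toLp 2 (Fin n → ℝ)).symm).measurable
    (MeasurableSet.univ_pi fun i => measurableSet_Icc)
lemma volume_cube (c : En n) {r : ℝ} (hr : 0 ≤ r) :
    volume (cube c r) = ENNReal.ofReal (r ^ n) := by
  rw [cube_eq_preimage,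
    (EuclideanSpace.volume_preserving_symm_measurableEquiv_toLp (Fin n)).measure_preimage
      ((MeasurableSet.univ_pi fun i => measurableSet_Icc).nullMeasurableSet)]
  rw [volume_pi_pi]
  simp only [Real.volume_Icc]
  have : ∀ i : Fin n, ENNReal.ofReal (c i + r/2 - (c i - r/2)) = ENNReal.ofReal r := by
    intro i; congr 1; ring
  rw [Finset.prod_congr rfl (fun i _ => this i), Finset.prod_const, Finset.card_univ,
    Fintype.card_fin, ← ENNReal.ofReal_pow hr]
lemma cube_mono (c : En n) {r r' : ℝ} (h : r ≤ r') : cube c r ⊆ cube c r' :=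
  fun x hx i => (hx i).trans (by linarith)
lemma mem_cube_self (c : En n) {r : ℝ} (hr : 0 ≤ r) : c ∈ cube c r :=
  fun i => by simp [abs_of_nonneg, hr]; positivity
lemma cube_subset_of_inter {c₁ c₂ : En n} {r₁ r₂ : ℝ} (hr₁ : 0 ≤ r₁)
    (hne : (cube c₁ r₁ ∩ cube c₂ r₂).Nonempty) (hle : r₁ ≤ 2 * r₂) :
    cube c₁ r₁ ⊆ cube c₂ (5 * r₂) := by
  obtain ⟨z, hz₁, hz₂⟩ := hne
  intro y hy i
  have h1 := hy i
  have h2 := hz₁ i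
  have h3 := hz₂ i
  have := abs_sub_le (y i) (z i) (c₂ i)
  have := abs_sub_le (y i) (c₁ i) (z i)
  have := abs_sub_le (c₁ i) (z i) (c₁ i)
  have h4 : |y i - z i| ≤ |y i - c₁ i| + |c₁ i - z i| := abs_sub_le _ _ _
  have h5 : |c₁ i - z i| = |z i - c₁ i| := abs_sub_comm _ _
  linarith [abs_sub_le (y i) (z i) (c₂ i)]
lemma abs_coord_le_norm (x : En n) (i : Fin n) : |x i| ≤ ‖x‖ := by
  rw [EuclideanSpace.norm_eq]
  rw [← Real.sqrt_sq_eq_abs]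
  apply Real.sqrt_le_sqrt
  calc x i ^ 2 = ‖x i‖ ^ 2 := by rw [Real.norm_eq_abs, sq_abs]
  _ ≤ ∑ j : Fin n, ‖x j‖ ^ 2 :=
    Finset.single_le_sum (f := fun j => ‖x j‖ ^ 2) (fun j _ => sq_nonneg _) (Finset.mem_univ i)
lemma ball_subset_cube (c : En n) {r : ℝ} : Metric.ball c (r/2) ⊆ cube c r := by
  intro x hx i
  have : |(x - c) i| ≤ ‖x - c‖ := abs_coord_le_norm (x - c) i
  have hxc : (x - c) i = x i - c i := rfl
  rw [hxc] at this
  have : ‖x - c‖ < r / 2 := by rwa [← dist_eq_norm, ← Metric.mem_ball]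
  linarith [abs_coord_le_norm (x - c) i, (show |(x-c) i| = |x i - c i| from by rw [hxc])]
lemma interior_cube_nonempty (c : En n) {r : ℝ} (hr : 0 < r) :
    (interior (cube c r)).Nonempty :=
  ⟨c, interior_mono (ball_subset_cube c) (Metric.ball_mem_nhds c (by linarith) |> mem_interior_iff_mem_nhds.2)⟩
lemma one_le_phi {α₀ t : ℝ} (hα : 0 ≤ α₀) (ht : 0 ≤ t) : 1 ≤ phi α₀ t :=
  Real.one_le_rpow (by linarith) hα
lemma phi_pos {α₀ t : ℝ} (hα : 0 ≤ α₀) (ht : 0 ≤ t) : 0 < phi α₀ t :=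
  lt_of_lt_of_le one_pos (one_le_phi hα ht)
lemma phi_scale {α₀ s t : ℝ} (hα : 0 ≤ α₀) (hs : 1 ≤ s) (ht : 0 ≤ t) :
    phi α₀ (s * t) ≤ s ^ α₀ * phi α₀ t := by
  unfold phi
  rw [← Real.mul_rpow (by linarith) (by linarith)]
  apply Real.rpow_le_rpow (by positivity) (by nlinarith) hα
lemma Bfun_div_le {u s : ℝ} (hu : 0 ≤ u) (hs : 1 ≤ s) : Bfun (u / s) ≤ Bfun u / s := by
  unfold Bfun
  rw [div_mul_eq_mul_div]
  have hlog : max (Real.log (u / s)) 0 ≤ max (Real.log u) 0 := by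
    rcases eq_or_lt_of_le hu with h | h
    · rw [← h]; simp
    · exact max_le_max (Real.log_le_log (by positivity) (div_le_self hu hs)) le_rfl
  have h1 : 0 ≤ u / s := by positivity
  have := mul_le_mul_of_nonneg_left (add_le_add_right hlog 1) h1
  calc u * (1 + max (Real.log (u / s)) 0) / s = u / s * (1 + max (Real.log (u / s)) 0) := by ring
  _ ≤ u / s * (1 + max (Real.log u) 0) := this
  _ = u * (1 + max (Real.log u) 0) / s := by ring
lemma lt_luxNorm_imp {S : Set (En n)} (hS0 : volume S ≠ 0) (hSt : volume S ≠ ⊤)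
    {f : En n → ℝ} {t : ℝ} (ht : 0 < t) (h : ENNReal.ofReal t < luxNorm S f) :
    volume S < ∫⁻ y in S, ENNReal.ofReal (Bfun (|f y| / t)) := by
  by_contra hcon
  push_neg at hcon
  have hmem : ENNReal.ofReal t ∈ ENNReal.ofReal '' {lam : ℝ | 0 < lam ∧
      (∫⁻ y in S, ENNReal.ofReal (Bfun (|f y| / lam))) / volume S ≤ 1} := by
    refine ⟨t, ⟨ht, ?_⟩, rfl⟩
    rw [ENNReal.div_le_iff hS0 hSt, one_mul]
    exact hcon
  exact absurd (sInf_le hmem) (not_le.2 h)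
lemma isClosed_cube (c : En n) (r : ℝ) : IsClosed (cube c r) := by
  have : cube c r = ⋂ i, (fun x : En n => x i) ⁻¹' (Icc (c i - r/2) (c i + r/2)) := by
    ext x
    simp only [cube, Set.mem_setOf_eq, Set.mem_iInter, Set.mem_preimage, Set.mem_Icc, abs_sub_le_iff]
    constructor
    · exact fun h i => ⟨by linarith [(h i).2], by linarith [(h i).1]⟩
    · exact fun h i => ⟨by linarith [(h i).2], by linarith [(h i).1]⟩
  rw [this]
  exact isClosed_iInter fun i =>
    IsClosed.preimage (EuclideanSpace.proj (𝕜 := ℝ) i).continuous isClosed_Icc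
lemma isCompact_cube (c : En n) {r : ℝ} (hr : 0 ≤ r) : IsCompact (cube c r) := by
  apply Metric.isCompact_of_isClosed_isBounded (isClosed_cube c r)
  rw [Metric.isBounded_iff_subset_closedBall c]
  refine ⟨Real.sqrt (n * (r/2)^2), fun x hx => ?_⟩
  rw [Metric.mem_closedBall, dist_eq_norm, EuclideanSpace.norm_eq]
  apply Real.sqrt_le_sqrt
  calc ∑ i, ‖(x - c) i‖ ^ 2 ≤ ∑ _i : Fin n, (r/2)^2 := by
        apply Finset.sum_le_sum
        intro i _
        have h1 : ‖(x - c) i‖ = |x i - c i| := rfl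
        rw [h1, ← sq_abs, abs_abs]
        exact pow_le_pow_left₀ (abs_nonneg _) (hx i) 2
  _ = n * (r/2)^2 := by rw [Finset.sum_const, Finset.card_univ, Fintype.card_fin, nsmul_eq_mul]
lemma wMeas_cube_lt_top {w : En n → ℝ} (hw : IsWeight w) (c : En n) {r : ℝ} (hr : 0 ≤ r) :
    wMeas w (cube c r) < ∞ := by
  rw [wMeas, withDensity_apply _ (measurableSet_cube c r)]
  exact (hw.2.integrableOn_isCompact (isCompact_cube c hr)).lintegral_lt_top
lemma wMeas_restrict_lintegral {w : En n → ℝ} (hw : IsWeight w) {S : Set (En n)}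
    (hS : MeasurableSet S) (g : En n → ℝ≥0∞) :
    ∫⁻ y in S, g y ∂(wMeas w) = ∫⁻ y in S, ENNReal.ofReal (w y) * g y := by
  rw [wMeas, setLIntegral_withDensity_eq_setLIntegral_mul_non_measurable₀ _ ?_ _ hS ?_]
  · rfl
  · exact (ENNReal.measurable_ofReal.comp_aemeasurable
      hw.2.aestronglyMeasurable.aemeasurable).restrict
  · exact Filter.Eventually.of_forall fun x => ENNReal.ofReal_lt_top
lemma keyCube {α₀ : ℝ} (hα₀ : 0 < α₀) {w : En n → ℝ} (hw : IsWeight w) {C₁ : ℝ} (hC₁ : 0 < C₁)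
    (hae : ∀ᵐ z ∂(volume : Measure (En n)), ∀ c r, 0 < r → z ∈ cube c r →
      wMeas w (cube c r) ≤ ENNReal.ofReal (C₁ * w z) *
        (ENNReal.ofReal (phi α₀ ((volume (cube c r)).toReal)) * volume (cube c r)))
    (g : En n → ℝ≥0∞) (c : En n) {r : ℝ} (hr : 0 < r)
    (hg : volume (cube c r) * ENNReal.ofReal (phi α₀ ((volume (cube c r)).toReal)) ≤
      ∫⁻ y in cube c r, g y) :
    wMeas w (cube c (5 * r)) ≤
      ENNReal.ofReal (C₁ * ((5:ℝ) ^ n) ^ α₀ * 5 ^ n) * ∫⁻ y in cube c r, g y ∂(wMeas w) := by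
  set K₀ : ℝ := C₁ * ((5:ℝ) ^ n) ^ α₀ * 5 ^ n with hK₀
  have hK₀pos : 0 < K₀ := by positivity
  have hvol : volume (cube c r) = ENNReal.ofReal (r ^ n) := volume_cube c hr.le
  have hVr : (volume (cube c r)).toReal = r ^ n := by
    rw [hvol, ENNReal.toReal_ofReal (by positivity)]
  have hvol5 : volume (cube c (5 * r)) = ENNReal.ofReal ((5:ℝ) ^ n * r ^ n) := by
    rw [volume_cube c (by positivity), mul_pow]
  have hV5 : (volume (cube c (5 * r))).toReal = (5:ℝ) ^ n * r ^ n := by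
    rw [hvol5, ENNReal.toReal_ofReal (by positivity)]
  set T : ℝ≥0∞ := volume (cube c r) * ENNReal.ofReal (phi α₀ ((volume (cube c r)).toReal))
    with hT
  have hphiV : 0 < phi α₀ (r ^ n) := phi_pos hα₀.le (by positivity)
  have hT0 : T ≠ 0 := by
    rw [hT, hVr, hvol]
    exact mul_ne_zero (by simp [ENNReal.ofReal_eq_zero]; positivity)
      (by simp [ENNReal.ofReal_eq_zero]; linarith)
  have hTtop : T ≠ ∞ := by
    rw [hT, hvol]
    exact ENNReal.mul_ne_top ENNReal.ofReal_ne_top ENNReal.ofReal_ne_top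
  have hwtop : wMeas w (cube c (5 * r)) ≠ ∞ := (wMeas_cube_lt_top hw c (by positivity)).ne
  -- pointwise a.e. bound on the cube
  have step1 : ∀ᵐ z ∂(volume.restrict (cube c r)),
      wMeas w (cube c (5 * r)) ≤ ENNReal.ofReal K₀ * ENNReal.ofReal (w z) * T := by
    filter_upwards [ae_restrict_of_ae hae, ae_restrict_mem (measurableSet_cube c r)]
      with z hz hzmem
    have h1 := hz c (5 * r) (by positivity) (cube_mono c (by linarith) hzmem)
    refine h1.trans ?_
    have hphile : phi α₀ ((5:ℝ) ^ n * r ^ n) ≤ ((5:ℝ) ^ n) ^ α₀ * phi α₀ (r ^ n) :=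
      phi_scale hα₀.le (one_le_pow₀ (by norm_num)) (by positivity)
    have hwz : 0 ≤ w z := (hw.1 z).le
    calc ENNReal.ofReal (C₁ * w z) *
          (ENNReal.ofReal (phi α₀ ((volume (cube c (5*r))).toReal)) * volume (cube c (5*r)))
        ≤ ENNReal.ofReal (C₁ * w z) *
          (ENNReal.ofReal (((5:ℝ) ^ n) ^ α₀ * phi α₀ (r ^ n)) *
            ENNReal.ofReal ((5:ℝ) ^ n * r ^ n)) := by
          rw [hV5, hvol5]
          exact mul_le_mul' le_rfl (mul_le_mul' (ENNReal.ofReal_le_ofReal hphile) le_rfl)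
      _ = ENNReal.ofReal K₀ * ENNReal.ofReal (w z) * T := by
          rw [hT, hVr, hvol, hK₀]
          rw [ENNReal.ofReal_mul hC₁.le, ENNReal.ofReal_mul (by positivity),
            ENNReal.ofReal_mul (by positivity), ENNReal.ofReal_mul (by positivity),
            ENNReal.ofReal_mul (by positivity)]
          ring
  -- multiply by g and integrate
  have h2 : wMeas w (cube c (5 * r)) * ∫⁻ y in cube c r, g y ≤
      (ENNReal.ofReal K₀ * ∫⁻ y in cube c r, g y ∂(wMeas w)) * T := by
    calc wMeas w (cube c (5 * r)) * ∫⁻ y in cube c r, g y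
        = ∫⁻ y in cube c r, wMeas w (cube c (5 * r)) * g y :=
          (lintegral_const_mul' _ _ hwtop).symm
      _ ≤ ∫⁻ y in cube c r, (ENNReal.ofReal K₀ * T) * (ENNReal.ofReal (w y) * g y) := by
          refine lintegral_mono_ae ?_
          filter_upwards [step1] with z hz
          calc wMeas w (cube c (5 * r)) * g z
              ≤ (ENNReal.ofReal K₀ * ENNReal.ofReal (w z) * T) * g z :=
                mul_le_mul_left hz _
            _ = (ENNReal.ofReal K₀ * T) * (ENNReal.ofReal (w z) * g z) := by ring
      _ = (ENNReal.ofReal K₀ * T) * ∫⁻ y in cube c r, ENNReal.ofReal (w y) * g y :=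
          lintegral_const_mul' _ _ (ENNReal.mul_ne_top ENNReal.ofReal_ne_top hTtop)
      _ = (ENNReal.ofReal K₀ * T) * ∫⁻ y in cube c r, g y ∂(wMeas w) := by
          rw [wMeas_restrict_lintegral hw (measurableSet_cube c r)]
      _ = (ENNReal.ofReal K₀ * ∫⁻ y in cube c r, g y ∂(wMeas w)) * T := by ring
  have h3 : wMeas w (cube c (5 * r)) * T ≤ wMeas w (cube c (5 * r)) * ∫⁻ y in cube c r, g y :=
    mul_le_mul' le_rfl hg
  exact (ENNReal.mul_le_mul_iff_left hT0 hTtop).1 (h3.trans h2)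
lemma a1_unpack {α₀ : ℝ} (hα₀ : 0 < α₀) {w : En n → ℝ} (hw : IsWeight w)
    (hA1 : MemA1Phi α₀ w) :
    ∃ C₁ > 0, ∀ᵐ z ∂(volume : Measure (En n)), ∀ c r, 0 < r → z ∈ cube c r →
      wMeas w (cube c r) ≤ ENNReal.ofReal (C₁ * w z) *
        (ENNReal.ofReal (phi α₀ ((volume (cube c r)).toReal)) * volume (cube c r)) := by
  obtain ⟨C₁, hC₁, hae⟩ := hA1
  refine ⟨C₁, hC₁, ?_⟩
  filter_upwards [hae] with z hz
  intro c r hr hmem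
  have hterm : (∫⁻ y in cube c r, ENNReal.ofReal |w y|) /
      (ENNReal.ofReal ((phi α₀ (cubeVol c r)) ^ (1:ℝ)) * volume (cube c r)) ≤
      MphiEta α₀ 1 w z := by
    unfold MphiEta MphiG
    exact le_iSup_of_le c (le_iSup_of_le r (le_iSup_of_le hr (le_iSup_of_le hmem le_rfl)))
  have hle := hterm.trans hz
  have habs : (∫⁻ y in cube c r, ENNReal.ofReal |w y|) = wMeas w (cube c r) := by
    rw [wMeas, withDensity_apply _ (measurableSet_cube c r)]
    exact lintegral_congr fun y => by rw [abs_of_pos (hw.1 y)]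
  rw [habs, Real.rpow_one] at hle
  have hden0 : ENNReal.ofReal (phi α₀ (cubeVol c r)) * volume (cube c r) ≠ 0 := by
    apply mul_ne_zero
    · simp only [ne_eq, ENNReal.ofReal_eq_zero, not_le]
      exact phi_pos hα₀.le ENNReal.toReal_nonneg
    · rw [volume_cube c hr.le]
      simp only [ne_eq, ENNReal.ofReal_eq_zero, not_le]
      positivity
  have hdentop : ENNReal.ofReal (phi α₀ (cubeVol c r)) * volume (cube c r) ≠ ∞ := by
    rw [volume_cube c hr.le]
    exact ENNReal.mul_ne_top ENNReal.ofReal_ne_top ENNReal.ofReal_ne_top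
  exact (ENNReal.div_le_iff hden0 hdentop).1 hle
lemma cube_select {α₀ η : ℝ} (hα₀ : 0 < α₀) (hη : 2 ≤ η) {f : En n → ℝ} {lam : ℝ}
    (hlam : 0 < lam) {x : En n} (hx : ENNReal.ofReal lam < MLlogL α₀ η f x) :
    ∃ c r, 0 < r ∧ x ∈ cube c r ∧
      volume (cube c r) * ENNReal.ofReal (phi α₀ ((volume (cube c r)).toReal)) ≤
        ∫⁻ y in cube c r, ENNReal.ofReal (Bfun (|f y| / lam)) := by
  rw [MLlogL] at hx
  simp only [lt_iSup_iff] at hx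
  obtain ⟨c, r, hr, hmem, hlt⟩ := hx
  refine ⟨c, r, hr, hmem, ?_⟩
  set V : ℝ := cubeVol c r with hV
  have hV0 : 0 ≤ V := ENNReal.toReal_nonneg
  have hphi1 : 1 ≤ phi α₀ V := one_le_phi hα₀.le hV0
  have hphipos : 0 < phi α₀ V := lt_of_lt_of_le one_pos hphi1
  set s : ℝ := (phi α₀ V) ^ η with hs
  have hs1 : 1 ≤ s := Real.one_le_rpow hphi1 (by linarith)
  have hspos : 0 < s := lt_of_lt_of_le one_pos hs1
  have hvol0 : volume (cube c r) ≠ 0 := by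
    rw [volume_cube c hr.le]; simp only [ne_eq, ENNReal.ofReal_eq_zero, not_le]; positivity
  have hvoltop : volume (cube c r) ≠ ∞ := by
    rw [volume_cube c hr.le]; exact ENNReal.ofReal_ne_top
  -- luxNorm (cube c r) f > ofReal (lam * s)
  have hlux : ENNReal.ofReal (lam * s) < luxNorm (cube c r) f := by
    by_contra hnot
    push_neg at hnot
    have h1 : ENNReal.ofReal ((phi α₀ V) ^ (-η)) * luxNorm (cube c r) f ≤
        ENNReal.ofReal ((phi α₀ V) ^ (-η)) * ENNReal.ofReal (lam * s) :=
      mul_le_mul' le_rfl hnot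
    rw [← ENNReal.ofReal_mul (by positivity)] at h1
    have h2 : (phi α₀ V) ^ (-η) * (lam * s) = lam := by
      rw [Real.rpow_neg hphipos.le, ← hs]
      field_simp
    rw [h2] at h1
    exact absurd hlt (not_lt.2 h1)
  have hint := lt_luxNorm_imp hvol0 hvoltop (by positivity) hlux
  -- pointwise comparison
  have hpw : ∀ y, ENNReal.ofReal (Bfun (|f y| / (lam * s))) ≤
      ENNReal.ofReal (Bfun (|f y| / lam)) * (ENNReal.ofReal s)⁻¹ := by
    intro y
    have h1 : |f y| / (lam * s) = (|f y| / lam) / s := by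
      rw [div_div]
    rw [h1]
    calc ENNReal.ofReal (Bfun ((|f y| / lam) / s))
        ≤ ENNReal.ofReal (Bfun (|f y| / lam) / s) :=
          ENNReal.ofReal_le_ofReal (Bfun_div_le (by positivity) hs1)
      _ = ENNReal.ofReal (Bfun (|f y| / lam)) / ENNReal.ofReal s :=
          ENNReal.ofReal_div_of_pos hspos
      _ = ENNReal.ofReal (Bfun (|f y| / lam)) * (ENNReal.ofReal s)⁻¹ := by
          rw [ENNReal.div_eq_inv_mul, mul_comm]
  have hs0' : ENNReal.ofReal s ≠ 0 := by
    simp only [ne_eq, ENNReal.ofReal_eq_zero, not_le]; exact hspos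
  have hint2 : volume (cube c r) <
      (∫⁻ y in cube c r, ENNReal.ofReal (Bfun (|f y| / lam))) * (ENNReal.ofReal s)⁻¹ := by
    refine hint.trans_le ?_
    rw [← lintegral_mul_const' _ _ (by simp [hs0'])]
    exact lintegral_mono hpw
  have hmul : volume (cube c r) * ENNReal.ofReal s ≤
      ∫⁻ y in cube c r, ENNReal.ofReal (Bfun (|f y| / lam)) := by
    calc volume (cube c r) * ENNReal.ofReal s
        ≤ (∫⁻ y in cube c r, ENNReal.ofReal (Bfun (|f y| / lam))) * (ENNReal.ofReal s)⁻¹ *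
            ENNReal.ofReal s := mul_le_mul_left hint2.le _
      _ = (∫⁻ y in cube c r, ENNReal.ofReal (Bfun (|f y| / lam))) *
            ((ENNReal.ofReal s)⁻¹ * ENNReal.ofReal s) := by ring
      _ = ∫⁻ y in cube c r, ENNReal.ofReal (Bfun (|f y| / lam)) := by
          rw [ENNReal.inv_mul_cancel hs0' ENNReal.ofReal_ne_top, mul_one]
  refine le_trans ?_ hmul
  apply mul_le_mul' le_rfl
  apply ENNReal.ofReal_le_ofReal
  calc phi α₀ ((volume (cube c r)).toReal) = (phi α₀ V) ^ (1:ℝ) := by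
        rw [Real.rpow_one]; rfl
    _ ≤ (phi α₀ V) ^ η := Real.rpow_le_rpow_of_exponent_le hphi1 (by linarith)
end Paper

open Paper MeasureTheory Real
open scoped ENNReal

-- STATEMENT 18
theorem stmt18 {n : ℕ} (hn : 1 ≤ n) {α₀ : ℝ} (hα₀ : 0 < α₀)
    (w : En n → ℝ) (hw : IsWeight w) (hA1 : MemA1Phi α₀ w) {η : ℝ} (hη : 2 ≤ η) :
    ∃ C > 0, ∀ (f : En n → ℝ) (lam : ℝ), 0 < lam →
      wMeas w {x | ENNReal.ofReal lam < MLlogL α₀ η f x} ≤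
        ENNReal.ofReal C * ∫⁻ y, ENNReal.ofReal (Bfun (|f y| / lam)) ∂(wMeas w) := by
  obtain ⟨C₁, hC₁, hae⟩ := a1_unpack hα₀ hw hA1
  refine ⟨C₁ * ((5:ℝ) ^ n) ^ α₀ * 5 ^ n, by positivity, ?_⟩
  intro f lam hlam
  set K₀ : ℝ := C₁ * ((5:ℝ) ^ n) ^ α₀ * 5 ^ n with hK₀
  set g : En n → ℝ≥0∞ := fun y => ENNReal.ofReal (Bfun (|f y| / lam)) with hgdef
  set E : Set (En n) := {x | ENNReal.ofReal lam < MLlogL α₀ η f x} with hE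
  set A : ℝ≥0∞ := ENNReal.ofReal K₀ * ∫⁻ y, g y ∂(wMeas w) with hA
  have hsel : ∀ x, x ∈ E → ∃ c r, 0 < r ∧ x ∈ cube c r ∧
      volume (cube c r) * ENNReal.ofReal (phi α₀ ((volume (cube c r)).toReal)) ≤
        ∫⁻ y in cube c r, g y :=
    fun x hx => cube_select hα₀ hη hlam hx
  choose! cx rx hrx hmemx hgx using hsel
  have hKC : ∀ (c : En n) (r : ℝ), 0 < r →
      (volume (cube c r) * ENNReal.ofReal (phi α₀ ((volume (cube c r)).toReal)) ≤
        ∫⁻ y in cube c r, g y) →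
      wMeas w (cube c (5 * r)) ≤ ENNReal.ofReal K₀ * ∫⁻ y in cube c r, g y ∂(wMeas w) :=
    fun c r hr h => keyCube hα₀ hw hC₁ hae g c hr h
  have key : ∀ K : ℕ, wMeas w (E ∩ Metric.closedBall 0 K) ≤ A := by
    intro K
    by_cases hbig : ∃ x ∈ E ∩ Metric.closedBall 0 (K:ℝ), (K:ℝ) ≤ rx x
    · obtain ⟨x, ⟨hxE, hxB⟩, hKr⟩ := hbig
      have hsub : E ∩ Metric.closedBall 0 (K:ℝ) ⊆ cube (cx x) (5 * rx x) := by
        intro y ⟨hyE, hyB⟩ i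
        have hyn : ‖y‖ ≤ K := by rwa [Metric.mem_closedBall, dist_zero_right] at hyB
        have hxn : ‖x‖ ≤ K := by rwa [Metric.mem_closedBall, dist_zero_right] at hxB
        have h1 : |y i| ≤ (K:ℝ) := (abs_coord_le_norm y i).trans hyn
        have h2 : |x i| ≤ (K:ℝ) := (abs_coord_le_norm x i).trans hxn
        have h3 : |x i - cx x i| ≤ rx x / 2 := hmemx x hxE i
        have h4 : |y i - cx x i| ≤ |y i| + |x i| + |x i - cx x i| := by
          calc |y i - cx x i| ≤ |y i - x i| + |x i - cx x i| := abs_sub_le _ _ _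
            _ ≤ (|y i| + |x i|) + |x i - cx x i| := by
                gcongr
                exact (abs_sub (y i) (x i))
        linarith
      calc wMeas w (E ∩ Metric.closedBall 0 (K:ℝ)) ≤ wMeas w (cube (cx x) (5 * rx x)) :=
            measure_mono hsub
        _ ≤ ENNReal.ofReal K₀ * ∫⁻ y in cube (cx x) (rx x), g y ∂(wMeas w) :=
            hKC (cx x) (rx x) (hrx x hxE) (hgx x hxE)
        _ ≤ A := by
            rw [hA]
            exact mul_le_mul' le_rfl (lintegral_mono' Measure.restrict_le_self le_rfl)
    · push_neg at hbig
      set E' : Set (En n) := E ∩ Metric.closedBall 0 (K:ℝ) with hE'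
      obtain ⟨u, hu_sub, hu_disj, hu_cover⟩ :=
        Vitali.exists_disjoint_subfamily_covering_enlargement
          (B := fun a : E' => cube (cx a.1) (rx a.1)) Set.univ (fun a => rx a.1) 2 one_lt_two
          (fun a _ => (hrx a.1 a.2.1).le) (K:ℝ) (fun a _ => (hbig a.1 a.2).le)
          (fun a _ => ⟨a.1, hmemx a.1 a.2.1⟩)
      have hu_count : u.Countable :=
        hu_disj.countable_of_nonempty_interior
          (fun a _ => interior_cube_nonempty _ (hrx a.1 a.2.1))
      have hcover : E' ⊆ ⋃ b ∈ u, cube (cx b.1) (5 * rx b.1) := by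
        intro x hx
        obtain ⟨b, hbu, hnei, hle⟩ := hu_cover ⟨x, hx⟩ (Set.mem_univ _)
        refine Set.mem_biUnion hbu ?_
        exact cube_subset_of_inter (hrx x hx.1).le hnei hle (hmemx x hx.1)
      haveI := hu_count.to_subtype
      calc wMeas w E' ≤ wMeas w (⋃ b ∈ u, cube (cx b.1) (5 * rx b.1)) := measure_mono hcover
        _ ≤ ∑' b : u, wMeas w (cube (cx b.1.1) (5 * rx b.1.1)) := measure_biUnion_le _ hu_count _
        _ ≤ ∑' b : u, ENNReal.ofReal K₀ * ∫⁻ y in cube (cx b.1.1) (rx b.1.1), g y ∂(wMeas w) :=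
            ENNReal.tsum_le_tsum fun b => hKC _ _ (hrx b.1.1 b.1.2.1) (hgx b.1.1 b.1.2.1)
        _ = ENNReal.ofReal K₀ * ∑' b : u, ∫⁻ y in cube (cx b.1.1) (rx b.1.1), g y ∂(wMeas w) :=
            ENNReal.tsum_mul_left
        _ = ENNReal.ofReal K₀ *
            ∫⁻ y in ⋃ b : u, cube (cx b.1.1) (rx b.1.1), g y ∂(wMeas w) := by
            congr 1
            rw [Measure.restrict_iUnion ?_ (fun b => measurableSet_cube _ _),
              lintegral_sum_measure]
            exact (hu_disj.subtype _ _)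
        _ ≤ A := by
            rw [hA]
            exact mul_le_mul' le_rfl (lintegral_mono' Measure.restrict_le_self le_rfl)
  have hEU : E = ⋃ K : ℕ, E ∩ Metric.closedBall 0 (K:ℝ) := by
    ext x
    simp only [Set.mem_iUnion, Set.mem_inter_iff]
    constructor
    · intro hx
      obtain ⟨K, hK⟩ := exists_nat_ge ‖x‖
      exact ⟨K, hx, by rwa [Metric.mem_closedBall, dist_zero_right]⟩
    · rintro ⟨K, hx, _⟩; exact hx
  have hdir : Directed (· ⊆ ·) (fun K : ℕ => E ∩ Metric.closedBall 0 (K:ℝ)) := by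
    apply Monotone.directed_le
    intro K K' hKK'
    exact Set.inter_subset_inter le_rfl (Metric.closedBall_subset_closedBall (by exact_mod_cast hKK'))
  have hsup : wMeas w (⋃ K : ℕ, E ∩ Metric.closedBall 0 (K:ℝ)) =
      ⨆ K : ℕ, wMeas w (E ∩ Metric.closedBall 0 (K:ℝ)) := Directed.measure_iUnion hdir
  rw [← hEU] at hsup
  rw [hsup]
  exact iSup_le key
end
end
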